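/- Let h₀ > 0. There exists a unique global C¹ solution θ : ℝ → ℝ of the ODE θ'(x) = √(sin²θ(x) + 2h₀(1 - cos θ(x))) with θ(0) = π, and it satisfies 0 < θ(x) < 2π for all x ∈ ℝ, θ is strictly increasing, lim_{x→-∞} θ(x) = 0, and lim_{x→+∞} θ(x) = 2π. -/

import Mathlib

open Real Filter

noncomputable def kk (h₀ : ℝ) : ℝ := Real.sqrt (1 + h₀)
noncomputable def DD (h₀ x : ℝ) : ℝ := Real.sqrt (1 + h₀ * Real.cosh (kk h₀ * x) ^ 2)
noncomputable def cc (h₀ x : ℝ) : ℝ :=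
  -(Real.sqrt h₀ * Real.sinh (kk h₀ * x)) / DD h₀ x
noncomputable def th (h₀ x : ℝ) : ℝ := 2 * Real.arccos (cc h₀ x)

variable {h₀ x : ℝ}

lemma kk_pos (h : 0 < h₀) : 0 < kk h₀ := Real.sqrt_pos.2 (by linarith)
lemma kk_sq (h : 0 < h₀) : kk h₀ ^ 2 = 1 + h₀ := Real.sq_sqrt (by linarith)
lemma Epos (h : 0 < h₀) : 0 < 1 + h₀ * Real.cosh (kk h₀ * x) ^ 2 := by
  nlinarith [Real.cosh_pos (kk h₀ * x)]
lemma DD_pos (h : 0 < h₀) : 0 < DD h₀ x := Real.sqrt_pos.2 (Epos h)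
lemma DD_sq (h : 0 < h₀) : DD h₀ x ^ 2 = 1 + h₀ * Real.cosh (kk h₀ * x) ^ 2 :=
  Real.sq_sqrt (Epos h).le

lemma cc_sq (h : 0 < h₀) :
    cc h₀ x ^ 2 = h₀ * Real.sinh (kk h₀ * x) ^ 2 / DD h₀ x ^ 2 := by
  rw [cc, div_pow, neg_pow, mul_pow, Real.sq_sqrt h.le]
  ring

lemma cc_sq_lt_one (h : 0 < h₀) : cc h₀ x ^ 2 < 1 := by
  have := DD_pos (x := x) (h₀ := h₀) h
  rw [cc_sq h, div_lt_one (by positivity), DD_sq h, Real.cosh_sq]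
  nlinarith

lemma one_sub_cc_sq (h : 0 < h₀) :
    1 - cc h₀ x ^ 2 = kk h₀ ^ 2 / DD h₀ x ^ 2 := by
  have hD := DD_pos (x := x) (h₀ := h₀) h
  rw [cc_sq h, kk_sq h, DD_sq h, Real.cosh_sq]
  field_simp
  ring

lemma sqrt_one_sub_cc_sq (h : 0 < h₀) :
    Real.sqrt (1 - cc h₀ x ^ 2) = kk h₀ / DD h₀ x := by
  rw [one_sub_cc_sq h, ← div_pow, Real.sqrt_sq (div_nonneg (kk_pos h).le (DD_pos h).le)]

lemma sqrt_cc_sq_add (h : 0 < h₀) :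
    Real.sqrt (cc h₀ x ^ 2 + h₀) =
      Real.sqrt h₀ * kk h₀ * Real.cosh (kk h₀ * x) / DD h₀ x := by
  have hD := DD_pos (x := x) h
  have : cc h₀ x ^ 2 + h₀ =
      (Real.sqrt h₀ * kk h₀ * Real.cosh (kk h₀ * x) / DD h₀ x) ^ 2 := by
    have e1 := DD_sq (x := x) (h₀ := h₀) h
    have e2 := kk_sq (h₀ := h₀) h
    have e3 : Real.sqrt h₀ ^ 2 = h₀ := Real.sq_sqrt h.le
    rw [cc_sq h]
    have e4 := Real.cosh_sq (kk h₀ * x)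
    field_simp
    linear_combination h₀ * e1 - kk h₀ ^ 2 * Real.cosh (kk h₀ * x) ^ 2 * e3 -
      h₀ * Real.cosh (kk h₀ * x) ^ 2 * e2 - h₀ * e4
  rw [this, Real.sqrt_sq (div_nonneg (mul_nonneg (mul_nonneg (Real.sqrt_nonneg _) (kk_pos h).le) (Real.cosh_pos _).le) hD.le)]

lemma hasDerivAt_cc (h : 0 < h₀) :
    HasDerivAt (cc h₀) (-((1 - cc h₀ x ^ 2) * Real.sqrt (cc h₀ x ^ 2 + h₀))) x := by
  have hk := kk_pos h
  have hD := DD_pos (x := x) h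
  have hE := Epos (x := x) h
  have hS : HasDerivAt (fun y => Real.sinh (kk h₀ * y)) (Real.cosh (kk h₀ * x) * kk h₀) x := by
    simpa [Function.comp_def] using (Real.hasDerivAt_sinh (kk h₀ * x)).comp x ((hasDerivAt_id x).const_mul (kk h₀))
  have hC : HasDerivAt (fun y => Real.cosh (kk h₀ * y)) (Real.sinh (kk h₀ * x) * kk h₀) x := by
    simpa [Function.comp_def] using (Real.hasDerivAt_cosh (kk h₀ * x)).comp x ((hasDerivAt_id x).const_mul (kk h₀))
  have hE' : HasDerivAt (fun y => 1 + h₀ * Real.cosh (kk h₀ * y) ^ 2)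
      (h₀ * (2 * Real.cosh (kk h₀ * x) * (Real.sinh (kk h₀ * x) * kk h₀))) x := by
    simpa [mul_assoc, mul_comm, mul_left_comm] using ((hC.pow 2).const_mul h₀).const_add 1
  have hDD : HasDerivAt (DD h₀)
      (h₀ * (2 * Real.cosh (kk h₀ * x) * (Real.sinh (kk h₀ * x) * kk h₀)) / (2 * DD h₀ x)) x :=
    hE'.sqrt (ne_of_gt hE)
  have hN : HasDerivAt (fun y => -(Real.sqrt h₀ * Real.sinh (kk h₀ * y)))
      (-(Real.sqrt h₀ * (Real.cosh (kk h₀ * x) * kk h₀))) x := (hS.const_mul (Real.sqrt h₀)).neg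
  have hc := hN.div hDD hD.ne'
  refine hc.congr_deriv ?_
  symm
  rw [one_sub_cc_sq h, sqrt_cc_sq_add h]
  have e1 := DD_sq (x := x) (h₀ := h₀) h
  have e2 := kk_sq (h₀ := h₀) h
  have e3 : Real.sqrt h₀ ^ 2 = h₀ := Real.sq_sqrt h.le
  have e4 := Real.cosh_sq (kk h₀ * x)
  field_simp
  linear_combination e1 - e2 + h₀ * e4

lemma hasDerivAt_th (h : 0 < h₀) :
    HasDerivAt (th h₀)
      (2 * Real.sqrt (1 - cc h₀ x ^ 2) * Real.sqrt (cc h₀ x ^ 2 + h₀)) x := by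
  have hc2 := cc_sq_lt_one (x := x) h
  have h1 : cc h₀ x ≠ -1 := fun e => by rw [e] at hc2; norm_num at hc2
  have h2 : cc h₀ x ≠ 1 := fun e => by rw [e] at hc2; norm_num at hc2
  have ha := ((Real.hasDerivAt_arccos h1 h2).comp x (hasDerivAt_cc h)).const_mul 2
  have hpos : 0 < Real.sqrt (1 - cc h₀ x ^ 2) := Real.sqrt_pos.2 (by nlinarith)
  have hsq : Real.sqrt (1 - cc h₀ x ^ 2) ^ 2 = 1 - cc h₀ x ^ 2 := Real.sq_sqrt (by nlinarith)
  refine ha.congr_deriv ?_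
  symm
  field_simp
  nlinarith [hsq, Real.sqrt_nonneg (cc h₀ x ^ 2 + h₀)]

lemma cc_mem (h : 0 < h₀) : -1 < cc h₀ x ∧ cc h₀ x < 1 := by
  have := cc_sq_lt_one (x := x) h
  constructor <;> nlinarith

lemma cos_th (h : 0 < h₀) : Real.cos (th h₀ x) = 2 * cc h₀ x ^ 2 - 1 := by
  rw [th, Real.cos_two_mul, Real.cos_arccos (cc_mem (x := x) h).1.le (cc_mem (x := x) h).2.le]

lemma sin_th (h : 0 < h₀) :
    Real.sin (th h₀ x) = 2 * Real.sqrt (1 - cc h₀ x ^ 2) * cc h₀ x := by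
  rw [th, Real.sin_two_mul, Real.sin_arccos,
    Real.cos_arccos (cc_mem (x := x) h).1.le (cc_mem (x := x) h).2.le]

lemma ff_th (h : 0 < h₀) :
    Real.sqrt (Real.sin (th h₀ x) ^ 2 + 2 * h₀ * (1 - Real.cos (th h₀ x))) =
      2 * Real.sqrt (1 - cc h₀ x ^ 2) * Real.sqrt (cc h₀ x ^ 2 + h₀) := by
  have hc2 := cc_sq_lt_one (x := x) h
  have hsq : Real.sqrt (1 - cc h₀ x ^ 2) ^ 2 = 1 - cc h₀ x ^ 2 := Real.sq_sqrt (by nlinarith)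
  have hsq2 : Real.sqrt (cc h₀ x ^ 2 + h₀) ^ 2 = cc h₀ x ^ 2 + h₀ := Real.sq_sqrt (by positivity)
  rw [sin_th h, cos_th h]
  rw [show (2 * Real.sqrt (1 - cc h₀ x ^ 2) * cc h₀ x) ^ 2 +
      2 * h₀ * (1 - (2 * cc h₀ x ^ 2 - 1)) =
      (2 * Real.sqrt (1 - cc h₀ x ^ 2) * Real.sqrt (cc h₀ x ^ 2 + h₀)) ^ 2 by nlinarith [hsq, hsq2]]
  exact Real.sqrt_sq (by positivity)

lemma deriv_th (h : 0 < h₀) :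
    deriv (th h₀) x =
      Real.sqrt (Real.sin (th h₀ x) ^ 2 + 2 * h₀ * (1 - Real.cos (th h₀ x))) := by
  rw [(hasDerivAt_th (x := x) h).deriv, ff_th h]

lemma contDiff_th (h : 0 < h₀) : ContDiff ℝ 1 (th h₀) := by
  rw [contDiff_one_iff_deriv]
  have hdiff : Differentiable ℝ (th h₀) := fun x => (hasDerivAt_th h).differentiableAt
  refine ⟨hdiff, ?_⟩
  have : deriv (th h₀) = fun x =>
      Real.sqrt (Real.sin (th h₀ x) ^ 2 + 2 * h₀ * (1 - Real.cos (th h₀ x))) := by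
    funext x; exact deriv_th h
  rw [this]
  have hcth : Continuous (th h₀) := hdiff.continuous
  fun_prop

lemma th_zero (h : 0 < h₀) : th h₀ 0 = π := by
  have hcc : cc h₀ 0 = 0 := by simp [cc]
  rw [th, hcc, Real.arccos_zero]
  ring

-- Lipschitz continuity of the RHS
lemma sqrt_diff_le (h : 0 < h₀) {u v : ℝ} (hu : h₀ ≤ u) (hv : h₀ ≤ v) :
    |Real.sqrt u - Real.sqrt v| ≤ |u - v| / (2 * Real.sqrt h₀) := by
  have hs := Real.sqrt_pos.2 h
  have hu0 : (0:ℝ) ≤ u := le_trans h.le hu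
  have hv0 : (0:ℝ) ≤ v := le_trans h.le hv
  have hsu : Real.sqrt h₀ ≤ Real.sqrt u := Real.sqrt_le_sqrt hu
  have hsv : Real.sqrt h₀ ≤ Real.sqrt v := Real.sqrt_le_sqrt hv
  have key : (Real.sqrt u - Real.sqrt v) * (Real.sqrt u + Real.sqrt v) = u - v := by
    have := Real.sq_sqrt hu0
    have := Real.sq_sqrt hv0
    nlinarith
  have hpos : 0 < Real.sqrt u + Real.sqrt v := by linarith
  rw [le_div_iff₀ (by positivity)]
  have habs : |Real.sqrt u - Real.sqrt v| * (Real.sqrt u + Real.sqrt v) = |u - v| := by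
    rw [← abs_of_pos hpos, ← abs_mul, key]
  nlinarith [abs_nonneg (Real.sqrt u - Real.sqrt v)]

lemma ff_eq (h : 0 < h₀) (y : ℝ) :
    Real.sqrt (Real.sin y ^ 2 + 2 * h₀ * (1 - Real.cos y)) =
      2 * |Real.sin (y / 2)| * Real.sqrt (h₀ + Real.cos (y / 2) ^ 2) := by
  have hs : Real.sin y = 2 * Real.sin (y / 2) * Real.cos (y / 2) := by
    rw [show y = 2 * (y / 2) by ring, Real.sin_two_mul]
    ring_nf
  have hc : Real.cos y = 1 - 2 * Real.sin (y / 2) ^ 2 := by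
    have hpy := Real.sin_sq_eq_half_sub (y / 2)
    rw [show 2 * (y / 2) = y by ring] at hpy
    linarith
  rw [hs, hc, show (2 * Real.sin (y / 2) * Real.cos (y / 2)) ^ 2 +
      2 * h₀ * (1 - (1 - 2 * Real.sin (y / 2) ^ 2)) =
      (2 * |Real.sin (y / 2)|) ^ 2 * (h₀ + Real.cos (y / 2) ^ 2) by
    linear_combination (-4 * (h₀ + Real.cos (y / 2) ^ 2)) * sq_abs (Real.sin (y / 2))]
  rw [Real.sqrt_mul (by positivity), Real.sqrt_sq (by positivity)]

lemma cos_lip (a b : ℝ) : |Real.cos a - Real.cos b| ≤ |a - b| := by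
  rw [Real.cos_sub_cos, abs_mul, abs_mul]
  have h1 := Real.abs_sin_le_abs (x := (a - b) / 2)
  have h2 := Real.abs_sin_le_one ((a + b) / 2)
  have h3 : |(-2 : ℝ)| = 2 := by norm_num
  rw [h3]
  have h4 : |(a - b) / 2| = |a - b| / 2 := by rw [abs_div]; norm_num
  nlinarith [abs_nonneg (Real.sin ((a + b) / 2)), abs_nonneg (Real.sin ((a - b) / 2)),
    abs_nonneg (a - b)]

lemma sin_lip (a b : ℝ) : |Real.sin a - Real.sin b| ≤ |a - b| := by
  rw [Real.sin_sub_sin, abs_mul, abs_mul]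
  have h1 := Real.abs_sin_le_abs (x := (a - b) / 2)
  have h2 := Real.abs_cos_le_one ((a + b) / 2)
  have h3 : |(2 : ℝ)| = 2 := by norm_num
  rw [h3]
  have h4 : |(a - b) / 2| = |a - b| / 2 := by rw [abs_div]; norm_num
  nlinarith [abs_nonneg (Real.cos ((a + b) / 2)), abs_nonneg (Real.sin ((a - b) / 2)),
    abs_nonneg (a - b)]

lemma ff_lipschitz (h : 0 < h₀) :
    LipschitzWith (1 / Real.sqrt h₀ + Real.sqrt (h₀ + 1)).toNNReal
      (fun y => Real.sqrt (Real.sin y ^ 2 + 2 * h₀ * (1 - Real.cos y))) := by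
  have hs := Real.sqrt_pos.2 h
  apply LipschitzWith.of_dist_le_mul
  intro a b
  rw [Real.dist_eq, Real.dist_eq, ff_eq h, ff_eq h,
    Real.coe_toNNReal _ (by positivity)]
  set sa := Real.sin (a / 2) with hsa
  set sb := Real.sin (b / 2) with hsb
  set Ha := Real.sqrt (h₀ + Real.cos (a / 2) ^ 2) with hHa
  set Hb := Real.sqrt (h₀ + Real.cos (b / 2) ^ 2) with hHb
  have hHb0 : 0 ≤ Hb := Real.sqrt_nonneg _
  have hHb1 : Hb ≤ Real.sqrt (h₀ + 1) :=
    Real.sqrt_le_sqrt (by nlinarith [Real.cos_sq_le_one (b / 2)])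
  have hsa1 : |sa| ≤ 1 := Real.abs_sin_le_one _
  have A1 : |Ha - Hb| ≤ |a - b| / (2 * Real.sqrt h₀) := by
    refine (sqrt_diff_le h (by nlinarith [sq_nonneg (Real.cos (a / 2))])
      (by nlinarith [sq_nonneg (Real.cos (b / 2))])).trans ?_
    have key : |(h₀ + Real.cos (a / 2) ^ 2) - (h₀ + Real.cos (b / 2) ^ 2)| ≤ |a - b| := by
      have e : (h₀ + Real.cos (a / 2) ^ 2) - (h₀ + Real.cos (b / 2) ^ 2) =
          (Real.cos (a / 2) - Real.cos (b / 2)) * (Real.cos (a / 2) + Real.cos (b / 2)) := by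
        ring
      rw [e, abs_mul]
      have l1 : |Real.cos (a / 2) - Real.cos (b / 2)| ≤ |a - b| / 2 := by
        have := cos_lip (a / 2) (b / 2)
        have h4 : |a / 2 - b / 2| = |a - b| / 2 := by
          rw [show a / 2 - b / 2 = (a - b) / 2 by ring, abs_div]; norm_num
        linarith
      have l2 : |Real.cos (a / 2) + Real.cos (b / 2)| ≤ 2 := by
        have e1 := Real.abs_cos_le_one (a / 2)
        have e2 := Real.abs_cos_le_one (b / 2)
        calc |Real.cos (a / 2) + Real.cos (b / 2)| ≤
            |Real.cos (a / 2)| + |Real.cos (b / 2)| := abs_add_le _ _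
          _ ≤ 2 := by linarith
      nlinarith [abs_nonneg (Real.cos (a / 2) - Real.cos (b / 2)), abs_nonneg (a - b)]
    exact (div_le_div_iff_of_pos_right (by positivity)).2 key
  have A2 : abs (|sa| - |sb|) ≤ |a - b| / 2 := by
    have h4 : |a / 2 - b / 2| = |a - b| / 2 := by
      rw [show a / 2 - b / 2 = (a - b) / 2 by ring, abs_div]; norm_num
    calc abs (|sa| - |sb|) ≤ |sa - sb| := abs_abs_sub_abs_le_abs_sub _ _
      _ ≤ |a / 2 - b / 2| := sin_lip _ _
      _ = |a - b| / 2 := h4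
  have hdecomp : 2 * |sa| * Ha - 2 * |sb| * Hb =
      2 * |sa| * (Ha - Hb) + 2 * Hb * (|sa| - |sb|) := by ring
  calc |2 * |sa| * Ha - 2 * |sb| * Hb|
      ≤ |2 * |sa| * (Ha - Hb)| + |2 * Hb * (|sa| - |sb|)| := by rw [hdecomp]; exact abs_add_le _ _
    _ = 2 * |sa| * |Ha - Hb| + 2 * Hb * abs (|sa| - |sb|) := by
        rw [abs_mul, abs_mul, abs_mul, abs_mul]
        simp [abs_abs, abs_of_nonneg hHb0]
    _ ≤ 2 * 1 * (|a - b| / (2 * Real.sqrt h₀)) + 2 * Real.sqrt (h₀ + 1) * (|a - b| / 2) := by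
        gcongr <;> first | exact abs_nonneg _ | positivity
    _ = (1 / Real.sqrt h₀ + Real.sqrt (h₀ + 1)) * |a - b| := by
        field_simp

lemma sol_eq (h : 0 < h₀) (θ : ℝ → ℝ) (h1 : ContDiff ℝ 1 θ) (h2 : θ 0 = π)
    (h3 : ∀ x, deriv θ x = Real.sqrt (Real.sin (θ x) ^ 2 + 2 * h₀ * (1 - Real.cos (θ x)))) :
    θ = th h₀ := by
  have hθd : ∀ x, HasDerivAt θ
      (Real.sqrt (Real.sin (θ x) ^ 2 + 2 * h₀ * (1 - Real.cos (θ x)))) x := by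
    intro x
    have hd : HasDerivAt θ (deriv θ x) x := ((h1.differentiable one_ne_zero) x).hasDerivAt
    rwa [h3 x] at hd
  have hthd : ∀ x, HasDerivAt (th h₀)
      (Real.sqrt (Real.sin (th h₀ x) ^ 2 + 2 * h₀ * (1 - Real.cos (th h₀ x)))) x := by
    intro x
    have := hasDerivAt_th (x := x) h
    rwa [← ff_th h] at this
  have hv : ∀ t : ℝ, LipschitzOnWith (1 / Real.sqrt h₀ + Real.sqrt (h₀ + 1)).toNNReal
      (fun y => Real.sqrt (Real.sin y ^ 2 + 2 * h₀ * (1 - Real.cos y))) Set.univ :=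
    fun _ => (ff_lipschitz h).lipschitzOnWith
  have h00 : θ 0 = th h₀ 0 := by rw [h2, th_zero h]
  funext x
  rcases le_or_gt 0 x with hx | hx
  · exact ODE_solution_unique_of_mem_Icc_right
      (v := fun _ y => Real.sqrt (Real.sin y ^ 2 + 2 * h₀ * (1 - Real.cos y)))
      (s := fun _ => Set.univ) (fun t _ => hv t) (h1.continuous.continuousOn)
      (fun t _ => (hθd t).hasDerivWithinAt) (fun _ _ => Set.mem_univ _)
      ((contDiff_th h).continuous.continuousOn)
      (fun t _ => (hthd t).hasDerivWithinAt) (fun _ _ => Set.mem_univ _)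
      h00 (Set.mem_Icc.2 ⟨hx, le_refl x⟩)
  · exact ODE_solution_unique_of_mem_Icc_left
      (v := fun _ y => Real.sqrt (Real.sin y ^ 2 + 2 * h₀ * (1 - Real.cos y)))
      (s := fun _ => Set.univ) (fun t _ => hv t) (h1.continuous.continuousOn)
      (fun t _ => (hθd t).hasDerivWithinAt) (fun _ _ => Set.mem_univ _)
      ((contDiff_th h).continuous.continuousOn)
      (fun t _ => (hthd t).hasDerivWithinAt) (fun _ _ => Set.mem_univ _)
      h00 (Set.mem_Icc.2 ⟨le_refl x, hx.le⟩)

lemma th_mem (h : 0 < h₀) : 0 < th h₀ x ∧ th h₀ x < 2 * π := by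
  have h1 := (cc_mem (x := x) h).1
  have h2 := (cc_mem (x := x) h).2
  constructor
  · have := Real.arccos_pos.2 h2
    rw [th]; linarith
  · have harc : Real.arccos (cc h₀ x) < π := by
      rw [Real.arccos, sub_lt_iff_lt_add]
      have := Real.neg_pi_div_two_lt_arcsin.2 h1
      linarith
    rw [th]; linarith

lemma th_strictMono (h : 0 < h₀) : StrictMono (th h₀) := by
  apply strictMono_of_deriv_pos
  intro x
  rw [(hasDerivAt_th (x := x) h).deriv]
  have hc2 := cc_sq_lt_one (x := x) h
  have h1 : 0 < Real.sqrt (1 - cc h₀ x ^ 2) := Real.sqrt_pos.2 (by nlinarith)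
  have h2 : 0 < Real.sqrt (cc h₀ x ^ 2 + h₀) := Real.sqrt_pos.2 (by positivity)
  positivity

lemma tendsto_tanh_atTop : Tendsto Real.tanh atTop (nhds 1) := by
  have key : ∀ x : ℝ, Real.tanh x = 1 - 2 / (Real.exp (2 * x) + 1) := by
    intro x
    rw [Real.tanh_eq_sinh_div_cosh, Real.sinh_eq, Real.cosh_eq]
    have h1 := Real.exp_pos x
    have h2 := Real.exp_pos (-x)
    have h3 : Real.exp (2 * x) = Real.exp x * Real.exp x := by
      rw [two_mul, Real.exp_add]
    have h4 : Real.exp x * Real.exp (-x) = 1 := by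
      rw [← Real.exp_add]; simp
    rw [h3]
    field_simp
    nlinarith [h4]
  have hlim : Tendsto (fun x : ℝ => 1 - 2 / (Real.exp (2 * x) + 1)) atTop (nhds 1) := by
    have he : Tendsto (fun x : ℝ => Real.exp (2 * x) + 1) atTop atTop :=
      tendsto_atTop_add_const_right atTop 1
        (Real.tendsto_exp_atTop.comp (tendsto_id.const_mul_atTop two_pos))
    have hdiv := (tendsto_const_nhds (x := (2:ℝ)) (f := (atTop : Filter ℝ))).div_atTop he
    have h2 := tendsto_const_nhds (x := (1:ℝ)) (f := (atTop : Filter ℝ))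
    simpa using h2.sub hdiv
  exact hlim.congr fun x => (key x).symm

lemma tendsto_cosh_atTop : Tendsto Real.cosh atTop atTop := by
  apply tendsto_atTop_mono (fun x => ?_)
    (Real.tendsto_exp_atTop.atTop_div_const two_pos)
  rw [Real.cosh_eq]
  have := (Real.exp_pos (-x)).le
  linarith

lemma cc_alt (h : 0 < h₀) :
    cc h₀ x = -(Real.sqrt h₀ * Real.tanh (kk h₀ * x)) /
      Real.sqrt ((Real.cosh (kk h₀ * x))⁻¹ ^ 2 + h₀) := by
  have hC := Real.cosh_pos (kk h₀ * x)
  have hE := Epos (x := x) h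
  have e1 : (Real.cosh (kk h₀ * x))⁻¹ ^ 2 + h₀ =
      (1 + h₀ * Real.cosh (kk h₀ * x) ^ 2) / Real.cosh (kk h₀ * x) ^ 2 := by
    field_simp
  rw [e1, Real.sqrt_div hE.le, Real.sqrt_sq hC.le, Real.tanh_eq_sinh_div_cosh]
  rw [cc, DD]
  have hD : Real.sqrt (1 + h₀ * Real.cosh (kk h₀ * x) ^ 2) ≠ 0 := (DD_pos (x := x) h).ne'
  field_simp

lemma tendsto_cc_atTop (h : 0 < h₀) : Tendsto (cc h₀) atTop (nhds (-1)) := by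
  have hk := kk_pos h
  have hs := Real.sqrt_pos.2 h
  have hkx : Tendsto (fun x : ℝ => kk h₀ * x) atTop atTop :=
    tendsto_id.const_mul_atTop hk
  have hnum : Tendsto (fun x : ℝ => -(Real.sqrt h₀ * Real.tanh (kk h₀ * x))) atTop
      (nhds (-(Real.sqrt h₀ * 1))) :=
    (((tendsto_tanh_atTop).comp hkx).const_mul _).neg
  have hcosh : Tendsto (fun x : ℝ => (Real.cosh (kk h₀ * x))⁻¹) atTop (nhds 0) :=
    tendsto_inv_atTop_zero.comp (tendsto_cosh_atTop.comp hkx)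
  have hden : Tendsto (fun x : ℝ => Real.sqrt ((Real.cosh (kk h₀ * x))⁻¹ ^ 2 + h₀)) atTop
      (nhds (Real.sqrt ((0:ℝ) ^ 2 + h₀))) :=
    (Real.continuous_sqrt.tendsto _).comp (((hcosh.pow 2).add tendsto_const_nhds))
  have hden' : Real.sqrt ((0:ℝ) ^ 2 + h₀) = Real.sqrt h₀ := by norm_num
  rw [hden'] at hden
  have := hnum.div hden hs.ne'
  have heq : -(Real.sqrt h₀ * 1) / Real.sqrt h₀ = -1 := by field_simp
  rw [heq] at this
  refine this.congr fun x => ?_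
  simp only [Pi.div_apply]
  rw [← cc_alt h]

lemma tendsto_cc_atBot (h : 0 < h₀) : Tendsto (cc h₀) atBot (nhds 1) := by
  have hneg : ∀ x, cc h₀ (-x) = -cc h₀ x := by
    intro x
    simp [cc, DD, mul_neg, Real.sinh_neg, Real.cosh_neg, neg_div]
  have h1 : Tendsto (fun x => cc h₀ (-x)) atTop (nhds 1) := by
    have := (tendsto_cc_atTop h).neg
    simp only [neg_neg] at this
    refine this.congr fun x => ?_
    rw [hneg]
  have := h1.comp tendsto_neg_atBot_atTop
  refine this.congr fun x => ?_
  simp [Function.comp]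

lemma tendsto_th_atTop (h : 0 < h₀) : Tendsto (th h₀) atTop (nhds (2 * π)) := by
  have h1 : Tendsto (fun x => Real.arccos (cc h₀ x)) atTop (nhds (Real.arccos (-1))) :=
    (Real.continuous_arccos.tendsto _).comp (tendsto_cc_atTop h)
  rw [Real.arccos_neg_one] at h1
  exact h1.const_mul 2

lemma tendsto_th_atBot (h : 0 < h₀) : Tendsto (th h₀) atBot (nhds 0) := by
  have h1 : Tendsto (fun x => Real.arccos (cc h₀ x)) atBot (nhds (Real.arccos 1)) :=
    (Real.continuous_arccos.tendsto _).comp (tendsto_cc_atBot h)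
  rw [Real.arccos_one] at h1
  have := h1.const_mul 2
  rw [mul_zero] at this
  exact this

theorem stmt5 (h₀ : ℝ) (h : 0 < h₀) :
    (∃! θ : ℝ → ℝ, ContDiff ℝ 1 θ ∧ θ 0 = π ∧
      ∀ x, deriv θ x = Real.sqrt (sin (θ x) ^ 2 + 2 * h₀ * (1 - cos (θ x)))) ∧
    (∀ θ : ℝ → ℝ, ContDiff ℝ 1 θ → θ 0 = π →
      (∀ x, deriv θ x = Real.sqrt (sin (θ x) ^ 2 + 2 * h₀ * (1 - cos (θ x)))) →
      (∀ x, 0 < θ x ∧ θ x < 2 * π) ∧ StrictMono θ ∧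
        Tendsto θ atBot (nhds 0) ∧ Tendsto θ atTop (nhds (2 * π))) := by
  constructor
  · refine ⟨th h₀, ⟨contDiff_th h, th_zero h, fun x => deriv_th h⟩, ?_⟩
    rintro θ ⟨c1, c2, c3⟩
    exact sol_eq h θ c1 c2 c3
  · intro θ c1 c2 c3
    have hθ : θ = th h₀ := sol_eq h θ c1 c2 c3
    subst hθ
    exact ⟨fun x => th_mem h, th_strictMono h, tendsto_th_atBot h, tendsto_th_atTop h⟩
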